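/- arXiv:2007.00870 — 3 statements merged into one kernel-verified Lean document; each statement's English description precedes it below -/
import Mathlib

section
/- For any strings x ∈ {0,1}^{pn}, y ∈ {0,1}^{n'}, any subset S ⊆ [n] with |S| = s, any hash functions h_j: {0,1}^p → {0,1}^q for j ∈ [n], and any k ∈ ℕ, the number of monotone matchings w = ((ρ₁,ρ'₁),...,(ρ_{|w|},ρ'_{|w|})) between the blocks of x indexed by S and substrings of y under the hash functions, satisfying |ρ'₁−ρ₁| + ∑_{i=2}^{|w|} |(ρ'_i−ρ'_{i−1}) − (ρ_i−ρ_{i−1})| ≤ k, is at most 2^{2s + k(log₂((k+s−1)/k) + log₂ e)}. -/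
open Finset Real

/-- Auxiliary shift-cost: given the previous matched pair `(pa, pb)`,
add `|(b' - pb) - (a' - pa)|` for each successive pair. -/
def costAux : ℤ → ℤ → List (ℤ × ℤ) → ℕ
  | _, _, [] => 0
  | pa, pb, (a, b) :: rest => ((b - pb) - (a - pa)).natAbs + costAux a b rest

/-- The shift-cost of a matching:
`|ρ'₁ − ρ₁| + ∑_{i≥2} |(ρ'_i − ρ'_{i−1}) − (ρ_i − ρ_{i−1})|`. -/
def shiftCost : List (ℤ × ℤ) → ℕ
  | [] => 0
  | (a, b) :: rest => (b - a).natAbs + costAux a b rest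

namespace Stmt4Aux

/-- The list of successive differences used in `costAux`. -/
def dAux : ℤ → ℤ → List (ℤ × ℤ) → List ℤ
  | _, _, [] => []
  | pa, pb, (a, b) :: rest => ((b - pb) - (a - pa)) :: dAux a b rest

/-- The list of successive differences used in `shiftCost`. -/
def dSeq : List (ℤ × ℤ) → List ℤ
  | [] => []
  | (a, b) :: rest => (b - a) :: dAux a b rest

lemma costAux_eq : ∀ (pa pb : ℤ) (l : List (ℤ × ℤ)),
    costAux pa pb l = ((dAux pa pb l).map Int.natAbs).sum
  | _, _, [] => rfl
  | pa, pb, (a, b) :: rest => by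
      simp [costAux, dAux, costAux_eq a b rest]

lemma shiftCost_eq (l : List (ℤ × ℤ)) :
    shiftCost l = ((dSeq l).map Int.natAbs).sum := by
  cases l with
  | nil => rfl
  | cons hd tl =>
      obtain ⟨a, b⟩ := hd
      simp [shiftCost, dSeq, costAux_eq]

lemma dAux_length : ∀ (pa pb : ℤ) (l : List (ℤ × ℤ)),
    (dAux pa pb l).length = l.length
  | _, _, [] => rfl
  | pa, pb, (a, b) :: rest => by simp [dAux, dAux_length a b rest]

lemma dSeq_length (l : List (ℤ × ℤ)) : (dSeq l).length = l.length := by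
  cases l with
  | nil => rfl
  | cons hd tl => obtain ⟨a, b⟩ := hd; simp [dSeq, dAux_length]

lemma dAux_inj : ∀ (u v : List (ℤ × ℤ)) (pa pb : ℤ),
    u.map Prod.fst = v.map Prod.fst → dAux pa pb u = dAux pa pb v → u = v
  | [], [], _, _, _, _ => rfl
  | [], (c, d) :: vt, _, _, h, _ => by simp at h
  | (a, b) :: ut, [], _, _, h, _ => by simp at h
  | (a, b) :: ut, (c, d) :: vt, pa, pb, h1, h2 => by
      simp only [List.map_cons, List.cons.injEq, dAux] at h1 h2
      obtain ⟨hac, h1'⟩ := h1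
      obtain ⟨hd, h2'⟩ := h2
      subst hac
      have hbd : b = d := by omega
      subst hbd
      rw [dAux_inj ut vt a b h1' h2']

lemma dSeq_inj (u v : List (ℤ × ℤ)) (h1 : u.map Prod.fst = v.map Prod.fst)
    (h2 : dSeq u = dSeq v) : u = v := by
  cases u with
  | nil =>
      cases v with
      | nil => rfl
      | cons hd tl => simp at h1
  | cons hd tl =>
      cases v with
      | nil => simp at h1
      | cons hd' tl' =>
          obtain ⟨a, b⟩ := hd
          obtain ⟨c, d⟩ := hd'
          simp only [List.map_cons, List.cons.injEq, dSeq] at h1 h2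
          obtain ⟨hac, h1'⟩ := h1
          obtain ⟨hd, h2'⟩ := h2
          subst hac
          have hbd : b = d := by omega
          subst hbd
          rw [dAux_inj tl tl' a b h1' h2']

lemma eq_of_maps {α β : Type*} : ∀ (u v : List (α × β)),
    u.map Prod.fst = v.map Prod.fst → u.map Prod.snd = v.map Prod.snd → u = v
  | [], [], _, _ => rfl
  | [], _ :: _, h, _ => by simp at h
  | _ :: _, [], h, _ => by simp at h
  | (a, b) :: ut, (c, d) :: vt, h1, h2 => by
      simp only [List.map_cons, List.cons.injEq] at h1 h2
      obtain ⟨hac, h1'⟩ := h1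
      obtain ⟨hbd, h2'⟩ := h2
      rw [hac, hbd, eq_of_maps ut vt h1' h2']

lemma sum_natAbs_getD : ∀ (D : List ℤ) (s : ℕ), D.length ≤ s →
    ∑ i ∈ Finset.range s, (D.getD i 0).natAbs = (D.map Int.natAbs).sum
  | [], s, _ => by simp
  | d :: tl, s, hs => by
      cases s with
      | zero => simp at hs
      | succ s' =>
          rw [Finset.sum_range_succ']
          simp only [List.getD_cons_succ, List.getD_cons_zero]
          rw [sum_natAbs_getD tl s' (by simpa using hs)]
          simp [Nat.add_comm]

lemma card_finset_sum {β γ : Type*} (t : Finset β) (f : β → Multiset γ) :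
    Multiset.card (∑ i ∈ t, f i) = ∑ i ∈ t, Multiset.card (f i) :=
  Finset.cons_induction_on t (by simp) (fun a t' ha ih => by
    simp [Finset.sum_cons, ih])

/-- `(m+1)^k ≤ e * m^k` when `1 ≤ k ≤ m`. -/
lemma pow_succ_le (k m : ℕ) (hk : 1 ≤ k) (hkm : k ≤ m) :
    ((m : ℝ) + 1) ^ k ≤ Real.exp 1 * (m : ℝ) ^ k := by
  have hm0 : (0 : ℝ) < m := by
    have : 1 ≤ m := le_trans hk hkm
    exact_mod_cast this
  have hsplit : ((m : ℝ) + 1) = (m : ℝ) * (1 + 1 / m) := by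
    field_simp
  have h1 : (1 + 1 / (m : ℝ)) ^ k ≤ Real.exp 1 := by
    have h2 : (1 + 1 / (m : ℝ)) ≤ Real.exp (1 / m) := by
      have := Real.add_one_le_exp (1 / (m : ℝ))
      linarith
    have h3 : (1 + 1 / (m : ℝ)) ^ k ≤ (Real.exp (1 / m)) ^ k := by
      apply pow_le_pow_left₀ _ h2
      positivity
    have h4 : (Real.exp (1 / (m : ℝ))) ^ k = Real.exp ((k : ℝ) * (1 / m)) := by
      rw [← Real.exp_nat_mul]
    have h5 : Real.exp ((k : ℝ) * (1 / (m : ℝ))) ≤ Real.exp 1 := by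
      apply Real.exp_le_exp.2
      rw [mul_one_div, div_le_one hm0]
      exact_mod_cast hkm
    calc (1 + 1 / (m : ℝ)) ^ k ≤ (Real.exp (1 / m)) ^ k := h3
      _ = Real.exp ((k : ℝ) * (1 / m)) := h4
      _ ≤ Real.exp 1 := h5
  calc ((m : ℝ) + 1) ^ k = (m : ℝ) ^ k * (1 + 1 / m) ^ k := by
        rw [hsplit, mul_pow]
    _ ≤ (m : ℝ) ^ k * Real.exp 1 := by
        apply mul_le_mul_of_nonneg_left h1 (by positivity)
    _ = Real.exp 1 * (m : ℝ) ^ k := by ring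

/-- `e * k^k ≤ e^k * k!` for `k ≥ 1`. -/
lemma factorial_lower (k : ℕ) (hk : 1 ≤ k) :
    Real.exp 1 * (k : ℝ) ^ k ≤ (Real.exp 1) ^ k * ((Nat.factorial k : ℕ) : ℝ) := by
  induction k with
  | zero => omega
  | succ j ih =>
      rcases Nat.eq_or_lt_of_le hk with h1 | h1
      · simp [← h1]
      · have hj : 1 ≤ j := by omega
        have ihj := ih hj
        have hstep : ((j : ℝ) + 1) ^ j ≤ Real.exp 1 * (j : ℝ) ^ j :=
          pow_succ_le j j hj le_rfl
        have hcast : ((j + 1 : ℕ) : ℝ) = (j : ℝ) + 1 := by push_cast; ring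
        have hfact : (Nat.factorial (j + 1) : ℝ) = ((j : ℝ) + 1) * ((Nat.factorial j : ℕ) : ℝ) := by
          rw [Nat.factorial_succ]; push_cast; ring
        have hepos : (0 : ℝ) < Real.exp 1 := Real.exp_pos 1
        have hekpos : (0 : ℝ) < (Real.exp 1) ^ j := by positivity
        have hjpos : (0 : ℝ) ≤ (j : ℝ) + 1 := by positivity
        -- goal : exp 1 * (j+1)^(j+1) ≤ (exp 1)^(j+1) * (j+1)!
        rw [hcast, hfact]
        have key : ((j : ℝ) + 1) ^ j ≤ (Real.exp 1) ^ j * ((Nat.factorial j : ℕ) : ℝ) := by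
          calc ((j : ℝ) + 1) ^ j ≤ Real.exp 1 * (j : ℝ) ^ j := hstep
            _ ≤ (Real.exp 1) ^ j * ((Nat.factorial j : ℕ) : ℝ) := ihj
        calc Real.exp 1 * ((j : ℝ) + 1) ^ (j + 1)
            = (Real.exp 1 * ((j : ℝ) + 1)) * ((j : ℝ) + 1) ^ j := by ring
          _ ≤ (Real.exp 1 * ((j : ℝ) + 1)) * ((Real.exp 1) ^ j * ((Nat.factorial j : ℕ) : ℝ)) := by
              apply mul_le_mul_of_nonneg_left key (by positivity)
          _ = (Real.exp 1) ^ (j + 1) * (((j : ℝ) + 1) * ((Nat.factorial j : ℕ) : ℝ)) := by ring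

/-- Key binomial bound: `C(m+1, k) ≤ (m/k)^k * e^k` for `1 ≤ k ≤ m`. -/
lemma choose_bound (k m : ℕ) (hk : 1 ≤ k) (hkm : k ≤ m) :
    (((m + 1).choose k : ℕ) : ℝ) ≤ ((m : ℝ) / k) ^ k * (Real.exp 1) ^ k := by
  have hk0 : (0 : ℝ) < k := by exact_mod_cast hk
  have hm0 : (0 : ℝ) < m := lt_of_lt_of_le hk0 (by exact_mod_cast hkm)
  have hfactpos : (0 : ℝ) < ((Nat.factorial k : ℕ) : ℝ) := by
    exact_mod_cast Nat.factorial_pos k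
  have h1 : (((m + 1).choose k : ℕ) : ℝ) ≤ ((m + 1 : ℕ) : ℝ) ^ k / ((Nat.factorial k : ℕ) : ℝ) := by
    have := Nat.choose_le_pow_div (α := ℝ) k (m + 1)
    calc (((m + 1).choose k : ℕ) : ℝ) ≤ ((m + 1 : ℕ) ^ k : ℝ) / ((Nat.factorial k : ℕ) : ℝ) := by
          exact_mod_cast this
      _ = ((m + 1 : ℕ) : ℝ) ^ k / ((Nat.factorial k : ℕ) : ℝ) := by push_cast; ring
  have h3 : ((m + 1 : ℕ) : ℝ) ^ k ≤ Real.exp 1 * (m : ℝ) ^ k := by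
    have := pow_succ_le k m hk hkm
    calc ((m + 1 : ℕ) : ℝ) ^ k = ((m : ℝ) + 1) ^ k := by push_cast; ring
      _ ≤ Real.exp 1 * (m : ℝ) ^ k := this
  have h2 := factorial_lower k hk
  have hmk : (0 : ℝ) ≤ (m : ℝ) ^ k := by positivity
  have hkpow : (0 : ℝ) < (k : ℝ) ^ k := by positivity
  have hmul : (m : ℝ) ^ k * (Real.exp 1 * (k : ℝ) ^ k) ≤
      (m : ℝ) ^ k * ((Real.exp 1) ^ k * ((Nat.factorial k : ℕ) : ℝ)) :=
    mul_le_mul_of_nonneg_left h2 hmk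
  have hgoal : Real.exp 1 * (m : ℝ) ^ k / ((Nat.factorial k : ℕ) : ℝ) ≤ ((m : ℝ) / k) ^ k * (Real.exp 1) ^ k := by
    rw [div_pow, div_mul_eq_mul_div, div_le_div_iff₀ hfactpos hkpow]
    nlinarith [hmul]
  calc (((m + 1).choose k : ℕ) : ℝ) ≤ ((m + 1 : ℕ) : ℝ) ^ k / ((Nat.factorial k : ℕ) : ℝ) := h1
    _ ≤ Real.exp 1 * (m : ℝ) ^ k / ((Nat.factorial k : ℕ) : ℝ) := by
        apply div_le_div_of_nonneg_right h3 hfactpos.le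
    _ ≤ ((m : ℝ) / k) ^ k * (Real.exp 1) ^ k := hgoal

end Stmt4Aux


/-- The number of monotone matchings between the blocks of `x` indexed by `S` and
substrings of `y` under hash functions `h`, with shift-cost at most `k`, is at most
`2^{2s + k(log₂((k+s−1)/k) + log₂ e)}`. -/
theorem stmt_4 (p n n' q s k : ℕ)
    (x : Fin n → Fin p → Bool) (y : ℕ → Bool)
    (S : Finset (Fin n)) (hS : S.card = s)
    (h : Fin n → (Fin p → Bool) → (Fin q → Bool)) :
    (Set.ncard {w : List (Fin n × ℕ) |
        List.Chain' (fun u v => u.1 < v.1 ∧ u.2 < v.2) w ∧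
        (∀ u ∈ w, u.1 ∈ S ∧ u.2 + p ≤ n' ∧
          h u.1 (x u.1) = h u.1 (fun a => y (u.2 + a))) ∧
        shiftCost (w.map (fun u => (((u.1 : ℕ) * p : ℤ), (u.2 : ℤ)))) ≤ k} : ℝ) ≤
      (2 : ℝ) ^ (2 * (s : ℝ) +
        (k : ℝ) * (Real.logb 2 (((k : ℝ) + s - 1) / k) + Real.logb 2 (Real.exp 1))) := by
  classical
  set W : Set (List (Fin n × ℕ)) := {w : List (Fin n × ℕ) |
        List.Chain' (fun u v => u.1 < v.1 ∧ u.2 < v.2) w ∧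
        (∀ u ∈ w, u.1 ∈ S ∧ u.2 + p ≤ n' ∧
          h u.1 (x u.1) = h u.1 (fun a => y (u.2 + a))) ∧
        shiftCost (w.map (fun u => (((u.1 : ℕ) * p : ℤ), (u.2 : ℤ)))) ≤ k} with hWdef
  -- abbreviations
  set zf : Fin n × ℕ → ℤ × ℤ := fun u => (((u.1 : ℕ) * p : ℤ), (u.2 : ℤ)) with hzf
  set dw : List (Fin n × ℕ) → List ℤ := fun w => Stmt4Aux.dSeq (w.map zf) with hdw
  set cw : List (Fin n × ℕ) → ℕ → ℕ := fun w i => ((dw w).getD i 0).natAbs with hcw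
  set enc : List (Fin n × ℕ) → Finset (Fin n) × (Fin s → Bool) × Multiset (Fin (s + 1)) :=
    fun w => ((w.map Prod.fst).toFinset,
      fun i : Fin s => decide (0 ≤ (dw w).getD i 0),
      (∑ i : Fin s, Multiset.replicate (cw w i) (Fin.castSucc i)) +
        Multiset.replicate (k - ∑ i : Fin s, cw w i) (Fin.last s)) with henc
  set T : Finset (Finset (Fin n) × (Fin s → Bool) × Multiset (Fin (s + 1))) :=
    S.powerset ×ˢ ((Finset.univ : Finset (Fin s → Bool)) ×ˢ
      (Finset.univ : Finset (Sym (Fin (s + 1)) k)).image Sym.toMultiset) with hT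
  -- basic facts about elements of W
  have hpw : ∀ w ∈ W, (w.map Prod.fst).Pairwise (· < ·) := by
    intro w hw
    have hc : List.Chain' (fun a b : Fin n => a < b) (w.map Prod.fst) := by
      rw [List.Chain', List.isChain_map]
      exact hw.1.imp (fun {a b} hab => hab.1)
    exact List.isChain_iff_pairwise.mp hc
  have hnodup : ∀ w ∈ W, (w.map Prod.fst).Nodup := by
    intro w hw
    exact (hpw w hw).imp ne_of_lt
  have hsub : ∀ w ∈ W, (w.map Prod.fst).toFinset ⊆ S := by
    intro w hw a ha
    rcases List.mem_map.1 (List.mem_toFinset.1 ha) with ⟨u, hu, rfl⟩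
    exact (hw.2.1 u hu).1
  have hlen_le : ∀ w ∈ W, w.length ≤ s := by
    intro w hw
    calc w.length = (w.map Prod.fst).length := (List.length_map _).symm
      _ = (w.map Prod.fst).toFinset.card := (List.toFinset_card_of_nodup (hnodup w hw)).symm
      _ ≤ S.card := Finset.card_le_card (hsub w hw)
      _ = s := hS
  have hdlen : ∀ w : List (Fin n × ℕ), (dw w).length = w.length := by
    intro w
    rw [hdw]
    simp [Stmt4Aux.dSeq_length]
  have hsum : ∀ w ∈ W, ∑ i : Fin s, cw w i ≤ k := by
    intro w hw
    have h1 : ∑ i : Fin s, cw w (i : ℕ) = ∑ i ∈ Finset.range s, cw w i :=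
      Fin.sum_univ_eq_sum_range (fun i => cw w i) s
    have h2 : ∑ i ∈ Finset.range s, ((dw w).getD i 0).natAbs = ((dw w).map Int.natAbs).sum :=
      Stmt4Aux.sum_natAbs_getD (dw w) s (by rw [hdlen]; exact hlen_le w hw)
    have h3 : ((dw w).map Int.natAbs).sum = shiftCost (w.map zf) := by
      rw [hdw]
      exact (Stmt4Aux.shiftCost_eq _).symm
    rw [h1]
    calc ∑ i ∈ Finset.range s, cw w i = shiftCost (w.map zf) := by rw [← h3, ← h2]
      _ ≤ k := hw.2.2
  -- counts in the multiset part of enc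
  have hcnt : ∀ (v : List (Fin n × ℕ)) (j : Fin s),
      Multiset.count (Fin.castSucc j) ((enc v).2.2) = cw v j := by
    intro v j
    rw [henc]
    simp only [Multiset.count_add, Multiset.count_sum', Multiset.count_replicate,
      Fin.castSucc_inj]
    rw [Finset.sum_ite_eq' Finset.univ j (fun i => cw v i), if_pos (Finset.mem_univ j),
      if_neg (Fin.castSucc_lt_last j).ne', add_zero]
  -- membership of the encoding in T
  have hmem : ∀ w ∈ W, enc w ∈ (↑T : Set _) := by
    intro w hw
    have hcard : Multiset.card ((enc w).2.2) = k := by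
      rw [henc]
      simp only [Multiset.card_add, Multiset.card_replicate, Stmt4Aux.card_finset_sum]
      exact Nat.add_sub_cancel' (hsum w hw)
    rw [hT]
    refine Finset.mem_coe.2 ?_
    simp only [Finset.mem_product]
    refine ⟨Finset.mem_powerset.2 (hsub w hw), Finset.mem_univ _, ?_⟩
    exact Finset.mem_image.2 ⟨⟨(enc w).2.2, hcard⟩, Finset.mem_univ _, rfl⟩
  -- injectivity of enc on W
  have hinj : Set.InjOn enc W := by
    intro w hw w' hw' he
    have h1 : (w.map Prod.fst).toFinset = (w'.map Prod.fst).toFinset := congrArg Prod.fst he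
    have h2 : (fun i : Fin s => decide (0 ≤ (dw w).getD i 0)) =
        (fun i : Fin s => decide (0 ≤ (dw w').getD i 0)) := congrArg (fun z => z.2.1) he
    have h3 : (enc w).2.2 = (enc w').2.2 := congrArg (fun z => z.2.2) he
    haveI : IsAntisymm (Fin n) (· < ·) := ⟨fun a b hab hba => (lt_asymm hab hba).elim⟩
    have hperm : List.Perm (w.map Prod.fst) (w'.map Prod.fst) :=
      List.perm_of_nodup_nodup_toFinset_eq (hnodup w hw) (hnodup w' hw') h1
    have hfst : w.map Prod.fst = w'.map Prod.fst :=
      List.Perm.eq_of_pairwise (fun a b _ _ hab hba => (lt_asymm hab hba).elim) (hpw w hw) (hpw w' hw') hperm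
    have hlenw : w.length = w'.length := by
      have := congrArg List.length hfst
      simpa using this
    -- the difference sequences agree
    have hdeq : dw w = dw w' := by
      apply List.ext_getElem (by rw [hdlen, hdlen, hlenw])
      intro i hi hi'
      have his : i < s := lt_of_lt_of_le (by rw [hdlen w] at hi; exact hi) (hlen_le w hw)
      have hc1 : cw w i = cw w' i := by
        have := congrArg (Multiset.count (Fin.castSucc (⟨i, his⟩ : Fin s))) h3
        rw [hcnt w ⟨i, his⟩, hcnt w' ⟨i, his⟩] at this
        exact this
      have hsgn : (0 ≤ (dw w).getD i 0) ↔ (0 ≤ (dw w').getD i 0) := by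
        have := congrFun h2 ⟨i, his⟩
        simpa [decide_eq_decide] using this
      have hg1 : (dw w).getD i 0 = (dw w)[i] := List.getD_eq_getElem _ _ hi
      have hg2 : (dw w').getD i 0 = (dw w')[i] := List.getD_eq_getElem _ _ hi'
      rw [hcw] at hc1
      simp only [hg1, hg2] at hc1 hsgn
      omega
    -- recover the full lists
    have hzfst : ∀ v : List (Fin n × ℕ), (v.map zf).map Prod.fst =
        (v.map Prod.fst).map (fun a : Fin n => ((a : ℕ) * p : ℤ)) := by
      intro v
      rw [List.map_map, List.map_map]
      rfl
    have hzeq : w.map zf = w'.map zf := by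
      apply Stmt4Aux.dSeq_inj
      · rw [hzfst, hzfst, hfst]
      · have := hdeq
        rw [hdw] at this
        exact this
    have hsnd : w.map Prod.snd = w'.map Prod.snd := by
      have hzsnd : ∀ v : List (Fin n × ℕ), (v.map zf).map Prod.snd =
          (v.map Prod.snd).map (fun m : ℕ => (m : ℤ)) := by
        intro v
        rw [List.map_map, List.map_map]
        rfl
      have hcast : (w.map Prod.snd).map (fun m : ℕ => (m : ℤ)) =
          (w'.map Prod.snd).map (fun m : ℕ => (m : ℤ)) := by
        rw [← hzsnd, ← hzsnd, hzeq]
      exact List.map_injective_iff.2 (fun a b hab => by exact_mod_cast hab) hcast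
    exact Stmt4Aux.eq_of_maps w w' hfst hsnd
  -- the cardinality bound
  have hcount : W.ncard ≤ 2 ^ s * (2 ^ s * (s + k).choose k) := by
    have hle : W.ncard ≤ (↑T : Set _).ncard :=
      Set.ncard_le_ncard_of_injOn enc hmem hinj T.finite_toSet
    rw [Set.ncard_coe_finset] at hle
    refine hle.trans ?_
    rw [hT, Finset.card_product, Finset.card_product, Finset.card_powerset, hS,
      Finset.card_univ]
    have himg : ((Finset.univ : Finset (Sym (Fin (s + 1)) k)).image Sym.toMultiset).card ≤
        (s + k).choose k := by
      refine (Finset.card_image_le).trans ?_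
      rw [Finset.card_univ, Sym.card_sym_eq_choose]
      have : Fintype.card (Fin (s + 1)) + k - 1 = s + k := by
        simp only [Fintype.card_fin]
        omega
      rw [this]
    have hfun : Fintype.card (Fin s → Bool) = 2 ^ s := by
      simp [Fintype.card_fun]
    rw [hfun]
    exact Nat.mul_le_mul_left _ (Nat.mul_le_mul_left _ himg)
  -- pass to the reals
  have hreal : ((2 ^ s * (2 ^ s * (s + k).choose k) : ℕ) : ℝ) ≤
      (2 : ℝ) ^ (2 * (s : ℝ) +
        (k : ℝ) * (Real.logb 2 (((k : ℝ) + s - 1) / k) + Real.logb 2 (Real.exp 1))) := by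
    have hpowC : ∀ C : ℝ, 0 < C →
        (2 : ℝ) ^ ((k : ℝ) * (Real.logb 2 C + Real.logb 2 (Real.exp 1))) =
          C ^ k * (Real.exp 1) ^ k := by
      intro C hC
      rw [mul_add, Real.rpow_add two_pos, mul_comm (k : ℝ) (Real.logb 2 C),
        mul_comm (k : ℝ) (Real.logb 2 (Real.exp 1)),
        Real.rpow_mul (le_of_lt two_pos), Real.rpow_mul (le_of_lt two_pos),
        Real.rpow_logb two_pos (by norm_num) hC,
        Real.rpow_logb two_pos (by norm_num) (Real.exp_pos 1),
        Real.rpow_natCast, Real.rpow_natCast]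
    have h2s : (2 : ℝ) ^ (2 * (s : ℝ)) = ((2 : ℝ) ^ s) * ((2 : ℝ) ^ s) := by
      rw [show 2 * (s : ℝ) = ((2 * s : ℕ) : ℝ) by push_cast; ring, Real.rpow_natCast,
        two_mul, pow_add]
    rw [Real.rpow_add two_pos, h2s]
    rcases Nat.eq_zero_or_pos k with hk0 | hk1
    · subst hk0
      rw [Nat.choose_zero_right]
      simp only [Nat.cast_zero, zero_mul, Real.rpow_zero, mul_one]
      push_cast
      norm_num
    · rcases Nat.eq_zero_or_pos s with hs0 | hs1
      · subst hs0
        rw [zero_add, Nat.choose_self]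
        simp only [pow_zero, one_mul, Nat.cast_one, Nat.cast_zero, add_zero]
        have he2 : (2 : ℝ) ≤ Real.exp 1 := by nlinarith [Real.add_one_le_exp 1]
        rcases Nat.eq_or_lt_of_le hk1 with hk1' | hk2
        · -- k = 1
          rw [← hk1']
          norm_num [Real.logb_zero]
          rw [Real.rpow_logb two_pos (by norm_num) (Real.exp_pos 1)]
          nlinarith [Real.add_one_le_exp 1]
        · -- k ≥ 2
          have hk2' : 2 ≤ k := hk2
          have hBpos : (0 : ℝ) < ((k : ℝ) - 1) / k := by
            apply div_pos
            · have : (2 : ℝ) ≤ k := by exact_mod_cast hk2'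
              linarith
            · exact_mod_cast hk1
          rw [hpowC _ hBpos]
          have hBe : 1 ≤ (((k : ℝ) - 1) / k) * Real.exp 1 := by
            have hkr : (2 : ℝ) ≤ (k : ℝ) := by exact_mod_cast hk2'
            have hkpos : (0 : ℝ) < k := by linarith
            rw [div_mul_eq_mul_div, le_div_iff₀ hkpos]
            nlinarith
          calc (1 : ℝ) = 1 ^ k := (one_pow k).symm
            _ ≤ ((((k : ℝ) - 1) / k) * Real.exp 1) ^ k := by
                apply pow_le_pow_left₀ (by norm_num) hBe
            _ = (((k : ℝ) - 1) / k) ^ k * (Real.exp 1) ^ k := mul_pow _ _ _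
      · -- main case : k ≥ 1, s ≥ 1
        set m := k + s - 1 with hm
        have hm1 : 1 ≤ m := by omega
        have hmcast : ((k : ℝ) + s - 1) = ((m : ℕ) : ℝ) := by
          rw [hm, Nat.cast_sub (by omega : 1 ≤ k + s)]
          push_cast
          ring
        have hApos : (0 : ℝ) < ((m : ℕ) : ℝ) / k := by
          apply div_pos
          · exact_mod_cast hm1
          · exact_mod_cast hk1
        rw [hmcast, hpowC _ hApos]
        have hchoose : (s + k).choose k = (m + 1).choose k := by
          congr 1
          omega
        have hkey := Stmt4Aux.choose_bound k m hk1 (by omega)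
        rw [hchoose]
        push_cast
        nlinarith [mul_le_mul_of_nonneg_left hkey
          (show (0 : ℝ) ≤ (2 : ℝ) ^ s * (2 : ℝ) ^ s by positivity)]
  calc (W.ncard : ℝ) ≤ ((2 ^ s * (2 ^ s * (s + k).choose k) : ℕ) : ℝ) := by
        exact_mod_cast hcount
    _ ≤ _ := hreal
end

section
/- Suppose k₁ ≥ k₂ ≥ ⋯ ≥ k_t ≥ 1 and s_i ≥ 2k_i for all i. In the iterative distance-reduction protocol, whenever an iteration processes index i with current residual bound k' ≤ 10·∑_{j>i−1} k_j (c = 10), the sketch length for that iteration, m = O((k'+k_i)·log(∑_{j≤i} s_j / (k'+k_i))), satisfies m = O(t · ∑_{j=1}^{t} k_j log(s_j/k_j)). Concretely: for any i ∈ [t] and any k' with k_i ≤ k'+k_i ≤ 11·∑_{j≥i} k_j, one has (k'+k_i)·log₂(∑_{j=1}^{i} s_j/(k'+k_i)) ≤ 33·t·∑_{j=1}^{t} k_j·log₂(s_j/k_j), assuming s_j ≥ 2k_j and k_1 ≥ ⋯ ≥ k_t ≥ 1. -/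
open Finset Real

lemma sum_le_prod_of_two_le {ι : Type*} (s : Finset ι) (hs : s.Nonempty)
    (f : ι → ℝ) (hf : ∀ j ∈ s, 2 ≤ f j) :
    ∑ j ∈ s, f j ≤ ∏ j ∈ s, f j := by
  induction hs using Finset.Nonempty.cons_induction with
  | singleton a => simp
  | cons a s ha hs ih =>
    rw [Finset.sum_cons, Finset.prod_cons]
    have h2a : 2 ≤ f a := hf a (Finset.mem_cons_self a s)
    have hih : ∑ j ∈ s, f j ≤ ∏ j ∈ s, f j :=
      ih (fun j hj => hf j (Finset.mem_cons_of_mem hj))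
    obtain ⟨b, hb⟩ := hs
    have hsum2 : 2 ≤ ∑ j ∈ s, f j :=
      le_trans (hf b (Finset.mem_cons_of_mem hb))
        (Finset.single_le_sum (f := f)
          (fun j hj => by linarith [hf j (Finset.mem_cons_of_mem hj)]) hb)
    have hP : 2 ≤ ∏ j ∈ s, f j := le_trans hsum2 hih
    nlinarith

lemma logb2_mono {x y : ℝ} (hx : 0 < x) (hxy : x ≤ y) :
    Real.logb 2 x ≤ Real.logb 2 y :=
  Real.logb_le_logb_of_le one_lt_two hx hxy

lemma key3 (x y A : ℝ) (hx : 0 < x) (hxy : x ≤ y) (hA : 2 * y ≤ A) :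
    x * Real.logb 2 (A / x) ≤ 3 * (y * Real.logb 2 (A / y)) := by
  have hy : 0 < y := lt_of_lt_of_le hx hxy
  have hA0 : 0 < A := by linarith
  have hL1 : 1 ≤ Real.logb 2 (A / y) := by
    have h2 : (2 : ℝ) ≤ A / y := by rw [le_div_iff₀ hy]; linarith
    calc (1 : ℝ) = Real.logb 2 2 := by simp
      _ ≤ Real.logb 2 (A / y) := by
          apply logb2_mono (by positivity) h2
  have hsplit : A / x = (A / y) * (y / x) := by field_simp
  have hlog : Real.logb 2 (A / x) = Real.logb 2 (A / y) + Real.logb 2 (y / x) := by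
    rw [hsplit, Real.logb_mul (by positivity) (by positivity)]
  have hlogle : Real.log (y / x) ≤ y / x - 1 := Real.log_le_sub_one_of_pos (by positivity)
  have hxl : x * Real.log (y / x) ≤ y - x := by
    have := mul_le_mul_of_nonneg_left hlogle hx.le
    calc x * Real.log (y / x) ≤ x * (y / x - 1) := this
      _ = y - x := by field_simp
  have hl2 : (0.6931471803 : ℝ) < Real.log 2 := Real.log_two_gt_d9
  have h2 : x * Real.logb 2 (y / x) ≤ 2 * y := by
    rw [Real.logb, mul_div_assoc']
    rw [div_le_iff₀ (by linarith)]
    nlinarith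
  nlinarith [mul_le_mul_of_nonneg_right hxy (by linarith : (0:ℝ) ≤ Real.logb 2 (A / y))]

/-- Sketch-length bound in the iterative distance-reduction protocol: for
`k₁ ≥ ⋯ ≥ k_t ≥ 1`, `s_j ≥ 2k_j`, any `i` and residual bound `k'` with
`k' + k_i ≤ 11·∑_{j ≥ i} k_j`, one has
`(k'+k_i)·log₂(∑_{j≤i} s_j/(k'+k_i)) ≤ 33·t·∑_j k_j·log₂(s_j/k_j)`. -/
theorem stmt_16 (t : ℕ) (ht : 1 ≤ t) (k s : Fin t → ℕ)
    (hmono : ∀ i j : Fin t, i ≤ j → k j ≤ k i)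
    (hpos : ∀ i, 1 ≤ k i) (hsk : ∀ i, 2 * k i ≤ s i)
    (i : Fin t) (k' : ℕ)
    (hk' : k' + k i ≤ 11 * ∑ j ∈ Finset.Ici i, k j) :
    ((k' + k i : ℕ) : ℝ) *
        Real.logb 2 ((∑ j ∈ Finset.Iic i, (s j : ℝ)) / ((k' + k i : ℕ) : ℝ)) ≤
      33 * (t : ℝ) * ∑ j, (k j : ℝ) * Real.logb 2 ((s j : ℝ) / (k j : ℝ)) := by
  set S : ℝ := ∑ j ∈ Finset.Iic i, (s j : ℝ) with hSdef
  set K : ℝ := ((k' + k i : ℕ) : ℝ) with hKdef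
  have hki1 : (1 : ℝ) ≤ (k i : ℝ) := by exact_mod_cast hpos i
  have hkipos : (0 : ℝ) < (k i : ℝ) := by linarith
  have hKge : (k i : ℝ) ≤ K := by
    rw [hKdef]; push_cast; linarith [Nat.cast_nonneg (α := ℝ) k']
  have hKpos : (0 : ℝ) < K := by linarith
  -- S is positive and at least 2 * k i
  have hSi : (2 * k i : ℝ) ≤ (s i : ℝ) := by exact_mod_cast hsk i
  have hSge : (2 : ℝ) * (k i : ℝ) ≤ S := by
    have h1 : (s i : ℝ) ≤ S := by
      apply Finset.single_le_sum (f := fun j => ((s j : ℕ) : ℝ))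
        (fun j _ => by positivity) (Finset.mem_Iic.mpr le_rfl)
    push_cast at hSi ⊢
    linarith
  have hSpos : (0 : ℝ) < S := by linarith
  -- K ≤ 11 * t * k i
  have hsum_le : ∑ j ∈ Finset.Ici i, k j ≤ t * k i := by
    calc ∑ j ∈ Finset.Ici i, k j ≤ (Finset.Ici i).card * k i := by
          apply Finset.sum_le_card_nsmul
          intro j hj
          exact hmono i j (Finset.mem_Ici.mp hj)
      _ ≤ t * k i := by
          apply Nat.mul_le_mul_right
          calc (Finset.Ici i).card ≤ (Finset.univ : Finset (Fin t)).card :=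
                Finset.card_le_univ _
            _ = t := by simp
  have hKt : K ≤ 11 * (t : ℝ) * (k i : ℝ) := by
    have : (k' + k i : ℕ) ≤ 11 * (t * k i) :=
      le_trans hk' (Nat.mul_le_mul_left 11 hsum_le)
    have h2 : ((k' + k i : ℕ) : ℝ) ≤ ((11 * (t * k i) : ℕ) : ℝ) := Nat.cast_le.mpr this
    rw [hKdef]
    push_cast at h2 ⊢
    linarith
  -- log monotone step
  have hdiv : S / K ≤ S / (k i : ℝ) :=
    div_le_div_of_nonneg_left hSpos.le hkipos hKge
  have hlog1 : Real.logb 2 (S / K) ≤ Real.logb 2 (S / (k i : ℝ)) :=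
    logb2_mono (by positivity) hdiv
  have hlogSki : (1 : ℝ) ≤ Real.logb 2 (S / (k i : ℝ)) := by
    have h2 : (2 : ℝ) ≤ S / (k i : ℝ) := by rw [le_div_iff₀ hkipos]; linarith
    calc (1 : ℝ) = Real.logb 2 2 := by simp
      _ ≤ _ := logb2_mono (by positivity) h2
  -- log of sum ≤ sum of logs
  have hmem2 : ∀ j ∈ Finset.Iic i, (2 : ℝ) ≤ (s j : ℝ) / (k i : ℝ) := by
    intro j hj
    have hkj : k i ≤ k j := hmono j i (Finset.mem_Iic.mp hj)
    have : (2 * k i : ℝ) ≤ (s j : ℝ) := by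
      have h1 : 2 * k i ≤ 2 * k j := by omega
      have h2 : 2 * k j ≤ s j := hsk j
      exact_mod_cast le_trans h1 h2
    rw [le_div_iff₀ hkipos]; linarith
  have hlogsum : Real.logb 2 (S / (k i : ℝ)) ≤
      ∑ j ∈ Finset.Iic i, Real.logb 2 ((s j : ℝ) / (k i : ℝ)) := by
    have hne : (Finset.Iic i).Nonempty := ⟨i, Finset.mem_Iic.mpr le_rfl⟩
    have hsp : S / (k i : ℝ) = ∑ j ∈ Finset.Iic i, (s j : ℝ) / (k i : ℝ) := by
      rw [hSdef, Finset.sum_div]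
    rw [hsp]
    calc Real.logb 2 (∑ j ∈ Finset.Iic i, (s j : ℝ) / (k i : ℝ))
        ≤ Real.logb 2 (∏ j ∈ Finset.Iic i, (s j : ℝ) / (k i : ℝ)) :=
          logb2_mono (hsp ▸ div_pos hSpos hkipos) (sum_le_prod_of_two_le _ hne _ hmem2)
      _ = ∑ j ∈ Finset.Iic i, Real.logb 2 ((s j : ℝ) / (k i : ℝ)) := by
          apply Real.logb_prod
          intro j hj
          have := hmem2 j hj
          linarith
  -- pointwise comparison
  have hterm : ∀ j ∈ Finset.Iic i,
      (k i : ℝ) * Real.logb 2 ((s j : ℝ) / (k i : ℝ)) ≤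
        3 * ((k j : ℝ) * Real.logb 2 ((s j : ℝ) / (k j : ℝ))) := by
    intro j hj
    have hkj : k i ≤ k j := hmono j i (Finset.mem_Iic.mp hj)
    apply key3
    · exact hkipos
    · exact_mod_cast hkj
    · exact_mod_cast hsk j
  have hki_step : (k i : ℝ) * Real.logb 2 (S / (k i : ℝ)) ≤
      3 * ∑ j ∈ Finset.Iic i, (k j : ℝ) * Real.logb 2 ((s j : ℝ) / (k j : ℝ)) := by
    calc (k i : ℝ) * Real.logb 2 (S / (k i : ℝ))
        ≤ (k i : ℝ) * ∑ j ∈ Finset.Iic i, Real.logb 2 ((s j : ℝ) / (k i : ℝ)) :=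
          mul_le_mul_of_nonneg_left hlogsum hkipos.le
      _ = ∑ j ∈ Finset.Iic i, (k i : ℝ) * Real.logb 2 ((s j : ℝ) / (k i : ℝ)) := by
          rw [Finset.mul_sum]
      _ ≤ ∑ j ∈ Finset.Iic i, 3 * ((k j : ℝ) * Real.logb 2 ((s j : ℝ) / (k j : ℝ))) :=
          Finset.sum_le_sum hterm
      _ = 3 * ∑ j ∈ Finset.Iic i, (k j : ℝ) * Real.logb 2 ((s j : ℝ) / (k j : ℝ)) := by
          rw [Finset.mul_sum]
  -- each term of the full sum is nonneg
  have hnonneg : ∀ j : Fin t, (0 : ℝ) ≤ (k j : ℝ) * Real.logb 2 ((s j : ℝ) / (k j : ℝ)) := by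
    intro j
    have hkj : (1 : ℝ) ≤ (k j : ℝ) := by exact_mod_cast hpos j
    have hkjpos : (0 : ℝ) < (k j : ℝ) := by linarith
    have h2 : (2 : ℝ) ≤ (s j : ℝ) / (k j : ℝ) := by
      rw [le_div_iff₀ hkjpos]
      have := hsk j; push_cast; exact_mod_cast by linarith [hsk j]
    have : (0 : ℝ) ≤ Real.logb 2 ((s j : ℝ) / (k j : ℝ)) := by
      calc (0 : ℝ) ≤ Real.logb 2 2 := by simp
        _ ≤ _ := logb2_mono (by positivity) h2
    positivity
  have hsub : ∑ j ∈ Finset.Iic i, (k j : ℝ) * Real.logb 2 ((s j : ℝ) / (k j : ℝ)) ≤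
      ∑ j, (k j : ℝ) * Real.logb 2 ((s j : ℝ) / (k j : ℝ)) :=
    Finset.sum_le_sum_of_subset_of_nonneg (Finset.subset_univ _)
      (fun j _ _ => hnonneg j)
  have htpos : (0 : ℝ) ≤ (t : ℝ) := Nat.cast_nonneg t
  calc K * Real.logb 2 (S / K)
      ≤ K * Real.logb 2 (S / (k i : ℝ)) := mul_le_mul_of_nonneg_left hlog1 hKpos.le
    _ ≤ (11 * (t : ℝ) * (k i : ℝ)) * Real.logb 2 (S / (k i : ℝ)) :=
        mul_le_mul_of_nonneg_right hKt (by linarith)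
    _ = 11 * (t : ℝ) * ((k i : ℝ) * Real.logb 2 (S / (k i : ℝ))) := by ring
    _ ≤ 11 * (t : ℝ) *
        (3 * ∑ j ∈ Finset.Iic i, (k j : ℝ) * Real.logb 2 ((s j : ℝ) / (k j : ℝ))) := by
        apply mul_le_mul_of_nonneg_left hki_step (by positivity)
    _ = 33 * (t : ℝ) * ∑ j ∈ Finset.Iic i, (k j : ℝ) * Real.logb 2 ((s j : ℝ) / (k j : ℝ)) := by
        ring
    _ ≤ 33 * (t : ℝ) * ∑ j, (k j : ℝ) * Real.logb 2 ((s j : ℝ) / (k j : ℝ)) := by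
        apply mul_le_mul_of_nonneg_left hsub (by positivity)
end

section
/- If (k_i+k_j)·log₂((s_i+s_j)/(k_i+k_j)) needs to be compared with k_i log₂(s_i/k_i) + k_j log₂(s_j/k_j): suppose log₂(s_i/k_i) ≤ 10·log₂(s_j/k_j) and log₂(s_j/k_j) ≤ 10·log₂(s_i/k_i), with s_i ≥ 2k_i ≥ 2 and s_j ≥ 2k_j ≥ 2. Then (k_i+k_j)·log₂((s_i+s_j)/(k_i+k_j)) ≤ 20·(k_i·log₂(s_i/k_i) + k_j·log₂(s_j/k_j)). -/
open Real

/-- Merging two sets whose ratios have comparable logarithms: if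
`log₂(s_i/k_i) ≤ 10·log₂(s_j/k_j)` and `log₂(s_j/k_j) ≤ 10·log₂(s_i/k_i)`, with
`s_i ≥ 2k_i ≥ 2` and `s_j ≥ 2k_j ≥ 2`, then
`(k_i+k_j)·log₂((s_i+s_j)/(k_i+k_j)) ≤ 20·(k_i·log₂(s_i/k_i) + k_j·log₂(s_j/k_j))`. -/
theorem stmt_18 (si ki sj kj : ℕ)
    (hki : 1 ≤ ki) (hkj : 1 ≤ kj) (hsi : 2 * ki ≤ si) (hsj : 2 * kj ≤ sj)
    (h1 : Real.logb 2 ((si : ℝ) / ki) ≤ 10 * Real.logb 2 ((sj : ℝ) / kj))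
    (h2 : Real.logb 2 ((sj : ℝ) / kj) ≤ 10 * Real.logb 2 ((si : ℝ) / ki)) :
    ((ki : ℝ) + kj) * Real.logb 2 (((si : ℝ) + sj) / ((ki : ℝ) + kj)) ≤
      20 * ((ki : ℝ) * Real.logb 2 ((si : ℝ) / ki) +
        (kj : ℝ) * Real.logb 2 ((sj : ℝ) / kj)) := by
  have hki' : (0:ℝ) < ki := by exact_mod_cast hki
  have hkj' : (0:ℝ) < kj := by exact_mod_cast hkj
  have hsi' : 2 * (ki:ℝ) ≤ si := by exact_mod_cast hsi
  have hsj' : 2 * (kj:ℝ) ≤ sj := by exact_mod_cast hsj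
  set a := Real.logb 2 ((si:ℝ)/ki) with ha
  set b := Real.logb 2 ((sj:ℝ)/kj) with hb
  have hra : (2:ℝ) ≤ (si:ℝ)/ki := (le_div_iff₀ hki').mpr (by linarith)
  have hrb : (2:ℝ) ≤ (sj:ℝ)/kj := (le_div_iff₀ hkj').mpr (by linarith)
  have ha1 : 1 ≤ a := by
    have := Real.logb_le_logb_of_le one_lt_two two_pos hra
    simpa using this
  have hb1 : 1 ≤ b := by
    have := Real.logb_le_logb_of_le one_lt_two two_pos hrb
    simpa using this
  -- mediant inequality
  have hmed : ((si:ℝ)+sj)/((ki:ℝ)+kj) ≤ max ((si:ℝ)/ki) ((sj:ℝ)/kj) := by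
    rcases le_total ((si:ℝ)/ki) ((sj:ℝ)/kj) with h | h
    · rw [max_eq_right h, div_le_div_iff₀ (by linarith) hkj']
      have hxy : (si:ℝ)*kj ≤ sj*ki := by
        have := (div_le_div_iff₀ hki' hkj').mp h
        linarith
      nlinarith
    · rw [max_eq_left h, div_le_div_iff₀ (by linarith) hki']
      have hxy : (sj:ℝ)*ki ≤ si*kj := by
        have := (div_le_div_iff₀ hkj' hki').mp h
        linarith
      nlinarith
  have hlog : Real.logb 2 (((si:ℝ)+sj)/((ki:ℝ)+kj)) ≤ max a b := by
    rcases le_total ((si:ℝ)/ki) ((sj:ℝ)/kj) with h | h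
    · rw [max_eq_right h] at hmed
      calc Real.logb 2 (((si:ℝ)+sj)/((ki:ℝ)+kj))
          ≤ b := Real.logb_le_logb_of_le one_lt_two (div_pos (by linarith) (by linarith)) hmed
        _ ≤ max a b := le_max_right _ _
    · rw [max_eq_left h] at hmed
      calc Real.logb 2 (((si:ℝ)+sj)/((ki:ℝ)+kj))
          ≤ a := Real.logb_le_logb_of_le one_lt_two (div_pos (by linarith) (by linarith)) hmed
        _ ≤ max a b := le_max_left _ _
  have hmaxa : max a b ≤ 10 * a := max_le (by linarith) h2
  have hmaxb : max a b ≤ 10 * b := max_le h1 (by linarith)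
  have h0 : (0:ℝ) ≤ max a b := le_trans (by linarith) (le_max_left a b)
  nlinarith [mul_le_mul_of_nonneg_left hlog (le_of_lt hki'),
    mul_le_mul_of_nonneg_left hlog (le_of_lt hkj'),
    mul_le_mul_of_nonneg_left hmaxa (le_of_lt hki'),
    mul_le_mul_of_nonneg_left hmaxb (le_of_lt hkj'),
    mul_pos hki' (lt_of_lt_of_le one_pos ha1),
    mul_pos hkj' (lt_of_lt_of_le one_pos hb1)]
end
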